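/- Let L be a Latin square of order n and let g be a non-identity automorphism of L which fixes each of the three parts R, C, E setwise. Then the cells fixed by g form a subsquare of L, and in particular g fixes at most n²/4 cells of L. -/

import Mathlib

/-- A Latin square of order `n`: every row and every column is a bijection. -/
def IsLatinSquare (n : ℕ) (L : Fin n → Fin n → Fin n) : Prop :=
  (∀ i, Function.Bijective (L i)) ∧ (∀ j, Function.Bijective (fun i => L i j))

/-- The part (row/column/entry) of an element of the disjoint union `R ⊕ C ⊕ E`. -/
def latinPart (n : ℕ) : (Fin n ⊕ Fin n ⊕ Fin n) → Fin 3 :=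
  Sum.elim (fun _ => 0) (Sum.elim (fun _ => 1) (fun _ => 2))

/-- The cells of a Latin square `L`, viewed as 3-element subsets of `R ⊕ C ⊕ E`. -/
def latinCells (n : ℕ) (L : Fin n → Fin n → Fin n) :
    Set (Set (Fin n ⊕ Fin n ⊕ Fin n)) :=
  {s | ∃ i j, s = {Sum.inl i, Sum.inr (Sum.inl j), Sum.inr (Sum.inr (L i j))}}

/-- `g` is an automorphism of the Latin square `L`: it preserves the partition
into the three parts `R, C, E` (possibly permuting the parts), and it maps the
set of cells of `L` onto itself. -/
def IsLatinAuto (n : ℕ) (L : Fin n → Fin n → Fin n)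
    (g : Equiv.Perm (Fin n ⊕ Fin n ⊕ Fin n)) : Prop :=
  (∃ σ : Equiv.Perm (Fin 3), ∀ x, latinPart n (g x) = σ (latinPart n x)) ∧
  (fun s => ⇑g '' s) '' latinCells n L = latinCells n L

/-- A subsquare of a Latin square `L` of order `n`: sets `R₀, C₀, E₀` of rows,
columns and entries of equal size such that the restriction of `L` to
`R₀ × C₀` takes values in `E₀` and forms a Latin square (every entry of `E₀`
occurs in each restricted row and each restricted column). -/
def IsSubsquare (n : ℕ) (L : Fin n → Fin n → Fin n)
    (R₀ C₀ E₀ : Finset (Fin n)) : Prop :=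
  R₀.card = C₀.card ∧ C₀.card = E₀.card ∧
  (∀ i ∈ R₀, ∀ j ∈ C₀, L i j ∈ E₀) ∧
  (∀ i ∈ R₀, ∀ k ∈ E₀, ∃ j ∈ C₀, L i j = k) ∧
  (∀ j ∈ C₀, ∀ k ∈ E₀, ∃ i ∈ R₀, L i j = k)

/-- Auxiliary: the cell of `L` at position `(i, j)`, as a set. -/
def latinCell (n : ℕ) (L : Fin n → Fin n → Fin n) (i j : Fin n) :
    Set (Fin n ⊕ Fin n ⊕ Fin n) :=
  {Sum.inl i, Sum.inr (Sum.inl j), Sum.inr (Sum.inr (L i j))}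

/-- If `g` is a non-identity automorphism of a Latin square `L` of order `n`
fixing each of the three parts `R, C, E` setwise, then the cells fixed by `g`
form a subsquare of `L`; in particular `g` fixes at most `n² / 4` cells. -/
theorem latin_auto_fixing_parts_fixed_cells_subsquare (n : ℕ)
    (L : Fin n → Fin n → Fin n) (hL : IsLatinSquare n L)
    (g : Equiv.Perm (Fin n ⊕ Fin n ⊕ Fin n)) (hg : IsLatinAuto n L g)
    (hg1 : g ≠ 1) (hparts : ∀ x, latinPart n (g x) = latinPart n x) :
    (∃ R₀ C₀ E₀ : Finset (Fin n), IsSubsquare n L R₀ C₀ E₀ ∧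
      ∀ i j : Fin n,
        (⇑g '' ({Sum.inl i, Sum.inr (Sum.inl j), Sum.inr (Sum.inr (L i j))} :
            Set (Fin n ⊕ Fin n ⊕ Fin n)) =
          {Sum.inl i, Sum.inr (Sum.inl j), Sum.inr (Sum.inr (L i j))}) ↔
        (i ∈ R₀ ∧ j ∈ C₀)) ∧
    (Set.ncard {s ∈ latinCells n L | ⇑g '' s = s} : ℝ) ≤ (n : ℝ) ^ 2 / 4 := by
  classical
  obtain ⟨-, hcells⟩ := hg
  -- extract the three permutations
  have hRex : ∀ i : Fin n, ∃ a, g (Sum.inl i) = Sum.inl a := by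
    intro i
    have h := hparts (Sum.inl i)
    rcases hx : g (Sum.inl i) with a | b | c
    · exact ⟨a, rfl⟩
    · rw [hx] at h; simp [latinPart] at h
    · rw [hx] at h; simp [latinPart] at h
  have hCex : ∀ j : Fin n, ∃ b, g (Sum.inr (Sum.inl j)) = Sum.inr (Sum.inl b) := by
    intro j
    have h := hparts (Sum.inr (Sum.inl j))
    rcases hx : g (Sum.inr (Sum.inl j)) with a | b | c
    · rw [hx] at h; simp [latinPart] at h
    · exact ⟨b, rfl⟩
    · rw [hx] at h; simp [latinPart] at h
  have hEex : ∀ k : Fin n, ∃ c, g (Sum.inr (Sum.inr k)) = Sum.inr (Sum.inr c) := by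
    intro k
    have h := hparts (Sum.inr (Sum.inr k))
    rcases hx : g (Sum.inr (Sum.inr k)) with a | b | c
    · rw [hx] at h; simp [latinPart] at h
    · rw [hx] at h; simp [latinPart] at h
    · exact ⟨c, rfl⟩
  choose α hα using hRex
  choose β hβ using hCex
  choose γ hγ using hEex
  -- the image of a cell
  have himg : ∀ i j, ⇑g '' latinCell n L i j =
      {Sum.inl (α i), Sum.inr (Sum.inl (β j)), Sum.inr (Sum.inr (γ (L i j)))} := by
    intro i j
    simp [latinCell, Set.image_insert_eq, hα, hβ, hγ]
  -- the key compatibility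
  have hkey : ∀ i j, L (α i) (β j) = γ (L i j) := by
    intro i j
    have hmem : ⇑g '' latinCell n L i j ∈ latinCells n L := by
      rw [← hcells]
      exact Set.mem_image_of_mem _ ⟨i, j, rfl⟩
    obtain ⟨i', j', h⟩ := hmem
    rw [himg i j] at h
    have e1 : α i = i' := by
      have hm : (Sum.inl (α i) : Fin n ⊕ Fin n ⊕ Fin n) ∈
          ({Sum.inl i', Sum.inr (Sum.inl j'), Sum.inr (Sum.inr (L i' j'))} :
            Set (Fin n ⊕ Fin n ⊕ Fin n)) := by
        rw [← h]; simp
      simpa using hm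
    have e2 : β j = j' := by
      have hm : (Sum.inr (Sum.inl (β j)) : Fin n ⊕ Fin n ⊕ Fin n) ∈
          ({Sum.inl i', Sum.inr (Sum.inl j'), Sum.inr (Sum.inr (L i' j'))} :
            Set (Fin n ⊕ Fin n ⊕ Fin n)) := by
        rw [← h]; simp
      simpa using hm
    have e3 : γ (L i j) = L i' j' := by
      have hm : (Sum.inr (Sum.inr (γ (L i j))) : Fin n ⊕ Fin n ⊕ Fin n) ∈
          ({Sum.inl i', Sum.inr (Sum.inl j'), Sum.inr (Sum.inr (L i' j'))} :
            Set (Fin n ⊕ Fin n ⊕ Fin n)) := by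
        rw [← h]; simp
      simpa using hm
    rw [e1, e2, e3]
  -- fixed cells characterization
  have hfix : ∀ i j, (⇑g '' latinCell n L i j = latinCell n L i j) ↔ (α i = i ∧ β j = j) := by
    intro i j
    rw [himg i j]
    constructor
    · intro h
      have e1 : α i = i := by
        have hm : (Sum.inl (α i) : Fin n ⊕ Fin n ⊕ Fin n) ∈ latinCell n L i j := by
          rw [← h]; simp
        simpa [latinCell] using hm
      have e2 : β j = j := by
        have hm : (Sum.inr (Sum.inl (β j)) : Fin n ⊕ Fin n ⊕ Fin n) ∈ latinCell n L i j := by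
          rw [← h]; simp
        simpa [latinCell] using hm
      exact ⟨e1, e2⟩
    · rintro ⟨h1, h2⟩
      have h3 : γ (L i j) = L i j := by rw [← hkey, h1, h2]
      rw [h1, h2, h3]; rfl
  set R₀ : Finset (Fin n) := Finset.univ.filter (fun i => α i = i) with hR₀
  set C₀ : Finset (Fin n) := Finset.univ.filter (fun j => β j = j) with hC₀
  set E₀ : Finset (Fin n) := Finset.univ.filter (fun k => γ k = k) with hE₀
  have memR : ∀ i, i ∈ R₀ ↔ α i = i := by intro i; simp [hR₀]
  have memC : ∀ j, j ∈ C₀ ↔ β j = j := by intro j; simp [hC₀]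
  have memE : ∀ k, k ∈ E₀ ↔ γ k = k := by intro k; simp [hE₀]
  -- closure
  have hclos : ∀ i ∈ R₀, ∀ j ∈ C₀, L i j ∈ E₀ := by
    intro i hi j hj
    rw [memE]
    rw [← hkey, (memR i).mp hi, (memC j).mp hj]
  -- row cover
  have hrow : ∀ i ∈ R₀, ∀ k ∈ E₀, ∃ j ∈ C₀, L i j = k := by
    intro i hi k hk
    obtain ⟨j, hj⟩ := (hL.1 i).2 k
    refine ⟨j, ?_, hj⟩
    rw [memC]
    have h := hkey i j
    rw [(memR i).mp hi, hj, (memE k).mp hk] at h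
    exact (hL.1 i).1 (h.trans hj.symm)
  -- column cover
  have hcol : ∀ j ∈ C₀, ∀ k ∈ E₀, ∃ i ∈ R₀, L i j = k := by
    intro j hj k hk
    obtain ⟨i, hi⟩ := (hL.2 j).2 k
    have hi' : L i j = k := hi
    refine ⟨i, ?_, hi⟩
    rw [memR]
    have h := hkey i j
    rw [(memC j).mp hj, hi', (memE k).mp hk] at h
    exact (hL.2 j).1 (h.trans hi'.symm)
  -- card lemmas
  have hce : R₀.Nonempty → C₀.card = E₀.card := by
    rintro ⟨i, hi⟩
    have himg2 : C₀.image (L i) = E₀ := by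
      ext k
      simp only [Finset.mem_image]
      constructor
      · rintro ⟨j, hj, rfl⟩; exact hclos i hi j hj
      · intro hk
        obtain ⟨j, hj, hjk⟩ := hrow i hi k hk
        exact ⟨j, hj, hjk⟩
    rw [← himg2, Finset.card_image_of_injective _ (hL.1 i).1]
  have hre : C₀.Nonempty → R₀.card = E₀.card := by
    rintro ⟨j, hj⟩
    have himg2 : R₀.image (fun i => L i j) = E₀ := by
      ext k
      simp only [Finset.mem_image]
      constructor
      · rintro ⟨i, hi, rfl⟩; exact hclos i hi j hj
      · intro hk
        obtain ⟨i, hi, hik⟩ := hcol j hj k hk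
        exact ⟨i, hi, hik⟩
    rw [← himg2, Finset.card_image_of_injective _ (hL.2 j).1]
  -- g = 1 characterization
  have hgid : (∀ i, α i = i) → (∀ j, β j = j) → (∀ k, γ k = k) → g = 1 := by
    intro h1 h2 h3
    ext x
    rcases x with i | j | k
    · rw [hα, h1]; rfl
    · rw [hβ, h2]; rfl
    · rw [hγ, h3]; rfl
  -- the fixed-cells set
  have hcellinj : Function.Injective (fun p : Fin n × Fin n => latinCell n L p.1 p.2) := by
    rintro ⟨i, j⟩ ⟨i', j'⟩ h
    simp only at h
    have h1 : (Sum.inl i : Fin n ⊕ Fin n ⊕ Fin n) ∈ latinCell n L i' j' := by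
      rw [← h]; simp [latinCell]
    have h2 : (Sum.inr (Sum.inl j) : Fin n ⊕ Fin n ⊕ Fin n) ∈ latinCell n L i' j' := by
      rw [← h]; simp [latinCell]
    simp only [latinCell, Set.mem_insert_iff, Set.mem_singleton_iff] at h1 h2
    have e1 : i = i' := by simpa using h1
    have e2 : j = j' := by simpa using h2
    simp [e1, e2]
  have hSet : {s ∈ latinCells n L | ⇑g '' s = s} =
      (fun p : Fin n × Fin n => latinCell n L p.1 p.2) ''
        ((R₀ ×ˢ C₀ : Finset (Fin n × Fin n)) : Set (Fin n × Fin n)) := by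
    ext s
    simp only [Set.mem_setOf_eq, Set.mem_image, Finset.mem_coe, Finset.mem_product]
    constructor
    · rintro ⟨⟨i, j, rfl⟩, hfixed⟩
      obtain ⟨h1, h2⟩ := (hfix i j).mp hfixed
      exact ⟨(i, j), ⟨(memR i).mpr h1, (memC j).mpr h2⟩, rfl⟩
    · rintro ⟨⟨i, j⟩, ⟨hi, hj⟩, rfl⟩
      exact ⟨⟨i, j, rfl⟩, (hfix i j).mpr ⟨(memR i).mp hi, (memC j).mp hj⟩⟩
  have hcount : Set.ncard {s ∈ latinCells n L | ⇑g '' s = s} = R₀.card * C₀.card := by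
    rw [hSet, Set.ncard_image_of_injective _ hcellinj, Set.ncard_coe_finset,
      Finset.card_product]
  by_cases hP : R₀.Nonempty ∧ C₀.Nonempty
  · -- main case
    obtain ⟨hRne, hCne⟩ := hP
    have hrc : R₀.card = C₀.card := (hre hCne).trans (hce hRne).symm
    have hceq : C₀.card = E₀.card := hce hRne
    -- R₀.card < n
    have hcard_univ : (Finset.univ : Finset (Fin n)).card = n := by simp
    have hlt : R₀.card < n := by
      rcases lt_or_eq_of_le (hcard_univ ▸ Finset.card_le_card (Finset.subset_univ R₀))
        with h | h
      · exact h
      · exfalso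
        apply hg1
        have hRuniv : R₀ = Finset.univ := Finset.eq_univ_of_card _ (by simpa using h)
        have hCuniv : C₀ = Finset.univ := Finset.eq_univ_of_card _ (by
          rw [← hrc]; simpa using h)
        have hEuniv : E₀ = Finset.univ := Finset.eq_univ_of_card _ (by
          rw [← hceq, ← hrc]; simpa using h)
        refine hgid (fun i => (memR i).mp ?_) (fun j => (memC j).mp ?_)
          (fun k => (memE k).mp ?_)
        · rw [hRuniv]; exact Finset.mem_univ _
        · rw [hCuniv]; exact Finset.mem_univ _
        · rw [hEuniv]; exact Finset.mem_univ _
    -- pick a non-fixed row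
    have hRne2 : R₀ ≠ Finset.univ := by
      intro h
      rw [h] at hlt
      simp at hlt
    obtain ⟨i', hi'⟩ : ∃ i', i' ∉ R₀ := by
      by_contra h
      push_neg at h
      exact hRne2 (Finset.eq_univ_iff_forall.mpr h)
    -- injective map E₀ → C₀ᶜ
    have hEC : E₀.card ≤ C₀ᶜ.card := by
      set f := Equiv.ofBijective (L i') (hL.1 i') with hf
      apply Finset.card_le_card_of_injOn (fun k => f.symm k)
      · intro k hk
        simp only [Finset.mem_coe, Finset.mem_compl, Finset.coe_compl, Set.mem_compl_iff]
        intro hj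
        set j := f.symm k with hjdef
        have hLij : L i' j = k := f.apply_symm_apply k
        have hbj : β j = j := (memC j).mp hj
        have hgk : γ k = k := (memE k).mp hk
        have h := hkey i' j
        rw [hbj, hLij, hgk] at h
        have hii : α i' = i' := (hL.2 j).1 (h.trans hLij.symm)
        exact hi' ((memR i').mpr hii)
      · exact f.symm.injective.injOn
    have hcompl : C₀ᶜ.card = n - C₀.card := by
      rw [Finset.card_compl]; simp
    have h2m : 2 * R₀.card ≤ n := by
      have h1 : E₀.card ≤ n - C₀.card := by rw [← hcompl]; exact hEC
      have h2 : C₀.card ≤ n :=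
        le_trans (Finset.card_le_card (Finset.subset_univ _)) hcard_univ.le
      omega
    refine ⟨⟨R₀, C₀, E₀, ⟨hrc, hceq, hclos, hrow, hcol⟩, ?_⟩, ?_⟩
    · intro i j
      rw [show (⇑g '' ({Sum.inl i, Sum.inr (Sum.inl j), Sum.inr (Sum.inr (L i j))} :
            Set (Fin n ⊕ Fin n ⊕ Fin n)) =
          {Sum.inl i, Sum.inr (Sum.inl j), Sum.inr (Sum.inr (L i j))}) =
          (⇑g '' latinCell n L i j = latinCell n L i j) from rfl, hfix i j,
        memR i, memC j]
    · rw [hcount, hrc]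
      have hcast : (C₀.card : ℝ) * 2 ≤ (n : ℝ) := by
        have h3 := h2m
        rw [hrc] at h3
        exact_mod_cast (by omega : C₀.card * 2 ≤ n)
      push_cast
      nlinarith [hcast]
  · -- degenerate case: no fixed rows or no fixed columns
    have hzero : R₀.card * C₀.card = 0 := by
      rcases not_and_or.mp hP with h | h
      · rw [Finset.not_nonempty_iff_eq_empty.mp h]; simp
      · rw [Finset.not_nonempty_iff_eq_empty.mp h]; simp
    refine ⟨⟨∅, ∅, ∅, ⟨by simp, by simp, by simp, by simp, by simp⟩, ?_⟩, ?_⟩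
    · intro i j
      rw [show (⇑g '' ({Sum.inl i, Sum.inr (Sum.inl j), Sum.inr (Sum.inr (L i j))} :
            Set (Fin n ⊕ Fin n ⊕ Fin n)) =
          {Sum.inl i, Sum.inr (Sum.inl j), Sum.inr (Sum.inr (L i j))}) =
          (⇑g '' latinCell n L i j = latinCell n L i j) from rfl, hfix i j]
      simp only [Finset.notMem_empty, false_and, iff_false]
      rintro ⟨h1, h2⟩
      rcases not_and_or.mp hP with h | h
      · exact h ⟨i, (memR i).mpr h1⟩
      · exact h ⟨j, (memC j).mpr h2⟩
    · rw [hcount, hzero]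
      simp only [Nat.cast_zero]
      positivity
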